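/- Let q be a real number with q > 0 and q ≠ 1. Then for all integers r ≥ 1 and k ≥ 0, (−1)^k · [k]! · Σ_{i=0}^{r−1} q^{i·k} · [r−1]_i / [k+r]_{i+1} = (−1)^k · [k]! · [r−1]! · q^{−r+1} · Σ_{i=0}^{r−1} ((q−1)^i · q^{i(i+1)/2 − i(r−1)} / [r−1−i]!) · (1/[k+i+1]). -/

import Mathlib

open Finset

/-- The q-bracket: `[x] = (q^x - 1)/(q - 1)`. -/
noncomputable def qb (q x : ℝ) : ℝ := (q ^ x - 1) / (q - 1)

/-- The q-falling factorial `[x]_m = [x]·[x-1]⋯[x-m+1]`. -/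
noncomputable def qff (q x : ℝ) (m : ℕ) : ℝ := ∏ j ∈ range m, qb q (x - j)

/-- The q-factorial `[m]! = [m]_m`. -/
noncomputable def qfact (q : ℝ) (m : ℕ) : ℝ := qff q (m : ℝ) m

lemma qb_natCast (q : ℝ) (n : ℕ) : qb q (n : ℝ) = (q ^ n - 1) / (q - 1) := by
  unfold qb; rw [Real.rpow_natCast]

lemma pow_ne_one' {q : ℝ} (hq : 0 < q) (hq1 : q ≠ 1) (n : ℕ) (hn : n ≠ 0) : q ^ n ≠ 1 := by
  rcases lt_or_gt_of_ne hq1 with h | h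
  · exact ne_of_lt (pow_lt_one₀ hq.le h (by omega))
  · exact ne_of_gt (one_lt_pow₀ h hn)

lemma qb_ne_zero {q : ℝ} (hq : 0 < q) (hq1 : q ≠ 1) (n : ℕ) (hn : n ≠ 0) :
    qb q (n : ℝ) ≠ 0 := by
  rw [qb_natCast]
  exact div_ne_zero (sub_ne_zero.mpr (pow_ne_one' hq hq1 n hn)) (sub_ne_zero.mpr hq1)

lemma qff_succ_top (q x : ℝ) (m : ℕ) : qff q x (m + 1) = qb q x * qff q (x - 1) m := by
  unfold qff
  rw [Finset.prod_range_succ', mul_comm]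
  congr 1
  · norm_num
  · apply Finset.prod_congr rfl
    intro j _
    congr 1
    push_cast
    ring

lemma qff_succ_bot (q x : ℝ) (m : ℕ) : qff q x (m + 1) = qff q x m * qb q (x - m) := by
  unfold qff; rw [Finset.prod_range_succ]

lemma qfact_succ (q : ℝ) (m : ℕ) : qfact q (m + 1) = qb q ((m + 1 : ℕ) : ℝ) * qfact q m := by
  unfold qfact
  rw [qff_succ_top]
  congr 2
  push_cast; ring

lemma qfact_ne_zero {q : ℝ} (hq : 0 < q) (hq1 : q ≠ 1) (m : ℕ) : qfact q m ≠ 0 := by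
  induction m with
  | zero => simp [qfact, qff]
  | succ n ih =>
    rw [qfact_succ]
    exact mul_ne_zero (qb_ne_zero hq hq1 (n+1) (by omega)) ih

lemma qff_nat_ne_zero {q : ℝ} (hq : 0 < q) (hq1 : q ≠ 1) (n m : ℕ) (h : m ≤ n) :
    qff q (n : ℝ) m ≠ 0 := by
  unfold qff
  apply Finset.prod_ne_zero_iff.mpr
  intro j hj
  simp only [mem_range] at hj
  have hc : (n : ℝ) - (j : ℕ) = ((n - j : ℕ) : ℝ) := by
    push_cast [Nat.cast_sub (by omega : j ≤ n)]; ring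
  rw [hc]
  exact qb_ne_zero hq hq1 (n - j) (by omega)

lemma qb_mul_qsub {q : ℝ} (hq1 : q ≠ 1) (n : ℕ) : (q - 1) * qb q (n : ℝ) = q ^ n - 1 := by
  rw [qb_natCast, mul_div_cancel₀ _ (sub_ne_zero.mpr hq1)]

lemma qb_sub (q : ℝ) (a b : ℕ) (h : a ≤ b) :
    qb q (b : ℝ) - qb q (a : ℝ) = q ^ a * qb q ((b - a : ℕ) : ℝ) := by
  rw [qb_natCast, qb_natCast, qb_natCast, div_sub_div_same]
  have h2 : q ^ b - 1 - (q ^ a - 1) = q ^ a * (q ^ (b - a) - 1) := by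
    rw [mul_sub, mul_one, ← pow_add, Nat.add_sub_cancel' h]
    ring
  rw [h2, mul_div_assoc]

noncomputable def cc (q : ℝ) (i s : ℕ) : ℝ :=
  (q - 1) ^ i * q ^ (i * (i + 1) / 2) / (q ^ (i * s) * qfact q (s - i))

noncomputable def Fp (q : ℝ) (s k : ℕ) : ℝ :=
  ∑ i ∈ range (s + 1), q ^ (i * k) * qff q (s : ℝ) i / qff q ((k : ℝ) + s + 1) (i + 1)

noncomputable def Gp (q : ℝ) (s k : ℕ) : ℝ :=
  qfact q s / q ^ s * ∑ i ∈ range (s + 1), cc q i s * (1 / qb q ((k : ℝ) + i + 1))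

lemma qfact_zero (q : ℝ) : qfact q 0 = 1 := by simp [qfact, qff]

lemma Pkey {q : ℝ} (hq : 0 < q) (hq1 : q ≠ 1) :
    ∀ r : ℕ, ∑ i ∈ range (r + 1), cc q i r = q ^ r / qfact q r := by
  intro r
  induction r with
  | zero => simp [cc, qfact_zero]
  | succ r ih =>
    rw [Finset.sum_range_succ']
    have h0 : cc q 0 (r + 1) = 1 / qfact q (r + 1) := by simp [cc]
    have hstep : ∀ i ∈ range (r + 1), cc q (i + 1) (r + 1) = (q - 1) / q ^ r * cc q i r := by
      intro i _
      unfold cc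
      have hT : (i + 1) * (i + 1 + 1) / 2 = i * (i + 1) / 2 + (i + 1) := by
        have h1 : (i + 1) * (i + 1 + 1) = i * (i + 1) + 2 * (i + 1) := by ring
        have h2 : i * (i + 1) % 2 = 0 := Nat.even_iff.mp (Nat.even_mul_succ_self i)
        omega
      have hE : (i + 1) * (r + 1) = i * r + (i + r + 1) := by ring
      have hS : (r + 1) - (i + 1) = r - i := by omega
      rw [hT, hE, hS, pow_add, pow_add, pow_succ]
      have hq0 : q ≠ 0 := hq.ne'
      have hf : qfact q (r - i) ≠ 0 := qfact_ne_zero hq hq1 _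
      field_simp
      ring
    rw [Finset.sum_congr rfl hstep, ← Finset.mul_sum, ih, h0]
    have hfs : qfact q (r + 1) = qb q ((r + 1 : ℕ) : ℝ) * qfact q r := qfact_succ q r
    have hqb : (q - 1) * qb q ((r + 1 : ℕ) : ℝ) = q ^ (r + 1) - 1 := qb_mul_qsub hq1 (r + 1)
    have hb : qb q ((r + 1 : ℕ) : ℝ) ≠ 0 := qb_ne_zero hq hq1 (r + 1) (by omega)
    have hf : qfact q r ≠ 0 := qfact_ne_zero hq hq1 r
    have hq0 : q ≠ 0 := hq.ne'
    push_cast at hfs hqb hb ⊢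
    rw [hfs]
    field_simp
    linear_combination hqb

lemma pf0 {q : ℝ} (hq : 0 < q) (hq1 : q ≠ 1) (k s i : ℕ) (hi : i ≤ s) :
    q ^ k / (qb q ((k : ℝ) + s + 2) * qb q ((k : ℝ) + i + 1))
      = 1 / (q ^ (i + 1) * qb q ((s + 1 - i : ℕ) : ℝ)) *
          (1 / qb q ((k : ℝ) + i + 1) - 1 / qb q ((k : ℝ) + s + 2)) := by
  have hA' : (k : ℝ) + i + 1 = ((k + i + 1 : ℕ) : ℝ) := by push_cast; ring
  have hD' : (k : ℝ) + s + 2 = ((k + s + 2 : ℕ) : ℝ) := by push_cast; ring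
  rw [hA', hD']
  have hsub := qb_sub q (k + i + 1) (k + s + 2) (by omega)
  rw [show (k + s + 2) - (k + i + 1) = s + 1 - i by omega] at hsub
  have hA : qb q ((k + i + 1 : ℕ) : ℝ) ≠ 0 := qb_ne_zero hq hq1 _ (by omega)
  have hD : qb q ((k + s + 2 : ℕ) : ℝ) ≠ 0 := qb_ne_zero hq hq1 _ (by omega)
  have hB : qb q ((s + 1 - i : ℕ) : ℝ) ≠ 0 := qb_ne_zero hq hq1 _ (by omega)
  have h1 : 1 / qb q ((k + i + 1 : ℕ) : ℝ) - 1 / qb q ((k + s + 2 : ℕ) : ℝ)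
      = q ^ (k + i + 1) * qb q ((s + 1 - i : ℕ) : ℝ)
          / (qb q ((k + i + 1 : ℕ) : ℝ) * qb q ((k + s + 2 : ℕ) : ℝ)) := by
    rw [div_sub_div _ _ hA hD, one_mul, mul_one, hsub]
  rw [h1]
  have hq0 : q ≠ 0 := hq.ne'
  push_cast at hA hD hB ⊢
  field_simp [hA, hD, hB]
  ring

lemma cc_succ {q : ℝ} (hq : 0 < q) (hq1 : q ≠ 1) (i s : ℕ) (hi : i ≤ s) :
    cc q i s = q ^ i * qb q ((s + 1 - i : ℕ) : ℝ) * cc q i (s + 1) := by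
  unfold cc
  have h1 : qfact q (s + 1 - i) = qb q ((s + 1 - i : ℕ) : ℝ) * qfact q (s - i) := by
    have := qfact_succ q (s - i)
    rw [show (s - i) + 1 = s + 1 - i by omega] at this
    exact this
  have h2 : i * (s + 1) = i * s + i := by ring
  rw [h1, h2, pow_add]
  have hq0 : q ≠ 0 := hq.ne'
  have hf : qfact q (s - i) ≠ 0 := qfact_ne_zero hq hq1 _
  have hB : qb q ((s + 1 - i : ℕ) : ℝ) ≠ 0 := qb_ne_zero hq hq1 _ (by omega)
  field_simp

lemma term_id {q : ℝ} (hq : 0 < q) (hq1 : q ≠ 1) (k s i : ℕ) (hi : i ≤ s) :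
    q ^ k * qb q ((s + 1 : ℕ) : ℝ) / qb q ((k : ℝ) + s + 2) *
        (qfact q s / q ^ s * (cc q i s * (1 / qb q ((k : ℝ) + i + 1))))
      = qfact q (s + 1) / q ^ (s + 1) * (cc q i (s + 1) * (1 / qb q ((k : ℝ) + i + 1)))
        - qfact q (s + 1) / q ^ (s + 1) * cc q i (s + 1) * (1 / qb q ((k : ℝ) + s + 2)) := by
  have hpf := pf0 hq hq1 k s i hi
  have hcs := cc_succ hq hq1 i s hi
  have hfs : qfact q (s + 1) = qb q ((s + 1 : ℕ) : ℝ) * qfact q s := qfact_succ q s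
  have hq0 : q ≠ 0 := hq.ne'
  have hB : qb q ((s + 1 - i : ℕ) : ℝ) ≠ 0 := qb_ne_zero hq hq1 _ (by omega)
  calc q ^ k * qb q ((s + 1 : ℕ) : ℝ) / qb q ((k : ℝ) + s + 2) *
        (qfact q s / q ^ s * (cc q i s * (1 / qb q ((k : ℝ) + i + 1))))
      = qb q ((s + 1 : ℕ) : ℝ) * qfact q s / q ^ s * cc q i s *
          (q ^ k / (qb q ((k : ℝ) + s + 2) * qb q ((k : ℝ) + i + 1))) := by ring
    _ = qb q ((s + 1 : ℕ) : ℝ) * qfact q s / q ^ s *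
          (q ^ i * qb q ((s + 1 - i : ℕ) : ℝ) * cc q i (s + 1)) *
          (1 / (q ^ (i + 1) * qb q ((s + 1 - i : ℕ) : ℝ)) *
            (1 / qb q ((k : ℝ) + i + 1) - 1 / qb q ((k : ℝ) + s + 2))) := by
        rw [← hcs, hpf]
    _ = qfact q (s + 1) / q ^ (s + 1) * (cc q i (s + 1) * (1 / qb q ((k : ℝ) + i + 1)))
        - qfact q (s + 1) / q ^ (s + 1) * cc q i (s + 1) * (1 / qb q ((k : ℝ) + s + 2)) := by
        rw [hfs]
        have hBi : qb q ((k : ℝ) + i + 1) ≠ 0 := by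
          rw [show (k : ℝ) + i + 1 = ((k + i + 1 : ℕ) : ℝ) by push_cast; ring]
          exact qb_ne_zero hq hq1 _ (by omega)
        have hBD : qb q ((k : ℝ) + s + 2) ≠ 0 := by
          rw [show (k : ℝ) + s + 2 = ((k + s + 2 : ℕ) : ℝ) by push_cast; ring]
          exact qb_ne_zero hq hq1 _ (by omega)
        push_cast at hBi hBD hB ⊢
        field_simp [hBi, hBD, hB]
        ring

lemma G_rec {q : ℝ} (hq : 0 < q) (hq1 : q ≠ 1) (k s : ℕ) :
    Gp q (s + 1) k = 1 / qb q ((k : ℝ) + s + 2)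
      + q ^ k * qb q ((s + 1 : ℕ) : ℝ) / qb q ((k : ℝ) + s + 2) * Gp q s k := by
  have hq0 : q ≠ 0 := hq.ne'
  have hD : qb q ((k : ℝ) + s + 2) ≠ 0 := by
    rw [show (k : ℝ) + s + 2 = ((k + s + 2 : ℕ) : ℝ) by push_cast; ring]
    exact qb_ne_zero hq hq1 _ (by omega)
  simp only [Gp]
  rw [Finset.mul_sum, Finset.mul_sum, Finset.mul_sum,
    Finset.sum_congr rfl (fun i hi => term_id hq hq1 k s i (by
      simp only [mem_range] at hi; omega)),
    Finset.sum_sub_distrib, Finset.sum_range_succ]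
  have hc2 : (k : ℝ) + ((s : ℕ) + 1 : ℕ) + 1 = (k : ℝ) + s + 2 := by push_cast; ring
  rw [hc2, ← Finset.mul_sum, ← Finset.sum_mul, ← Finset.mul_sum]
  have hP := Pkey hq hq1 (s + 1)
  rw [Finset.sum_range_succ] at hP
  have hfne : qfact q (s + 1) ≠ 0 := qfact_ne_zero hq hq1 _
  have hP1 : qfact q (s + 1) / q ^ (s + 1) *
      ((∑ i ∈ range (s + 1), cc q i (s + 1)) + cc q (s + 1) (s + 1)) = 1 := by
    rw [hP]
    field_simp
  linear_combination (1 / qb q ((k : ℝ) + s + 2)) * hP1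

lemma F_rec {q : ℝ} (hq : 0 < q) (hq1 : q ≠ 1) (k s : ℕ) :
    Fp q (s + 1) k = 1 / qb q ((k : ℝ) + s + 2)
      + q ^ k * qb q ((s + 1 : ℕ) : ℝ) / qb q ((k : ℝ) + s + 2) * Fp q s k := by
  have hq0 : q ≠ 0 := hq.ne'
  have hD : qb q ((k : ℝ) + s + 2) ≠ 0 := by
    rw [show (k : ℝ) + s + 2 = ((k + s + 2 : ℕ) : ℝ) by push_cast; ring]
    exact qb_ne_zero hq hq1 _ (by omega)
  simp only [Fp]
  rw [Finset.sum_range_succ']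
  have h0 : q ^ (0 * k) * qff q ((s + 1 : ℕ) : ℝ) 0 / qff q ((k : ℝ) + ((s + 1 : ℕ) : ℝ) + 1) (0 + 1)
      = 1 / qb q ((k : ℝ) + s + 2) := by
    have e2 : qff q ((k : ℝ) + ((s + 1 : ℕ) : ℝ) + 1) (0 + 1) = qb q ((k : ℝ) + s + 2) := by
      simp only [qff, zero_add, Finset.prod_range_one, Nat.cast_zero, sub_zero]
      congr 1
      push_cast
      ring
    rw [e2]
    simp [qff]
  have hterm : ∀ i ∈ range (s + 1),
      q ^ ((i + 1) * k) * qff q ((s + 1 : ℕ) : ℝ) (i + 1) /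
          qff q ((k : ℝ) + ((s + 1 : ℕ) : ℝ) + 1) (i + 1 + 1)
        = q ^ k * qb q ((s + 1 : ℕ) : ℝ) / qb q ((k : ℝ) + s + 2) *
            (q ^ (i * k) * qff q (s : ℝ) i / qff q ((k : ℝ) + s + 1) (i + 1)) := by
    intro i hi
    simp only [mem_range] at hi
    have e1 : qff q ((s + 1 : ℕ) : ℝ) (i + 1) = qb q ((s + 1 : ℕ) : ℝ) * qff q (s : ℝ) i := by
      rw [qff_succ_top]
      congr 2
      push_cast
      ring
    have e2 : qff q ((k : ℝ) + ((s + 1 : ℕ) : ℝ) + 1) (i + 1 + 1)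
        = qb q ((k : ℝ) + s + 2) * qff q ((k : ℝ) + s + 1) (i + 1) := by
      rw [qff_succ_top]
      congr 2
      · push_cast; ring
      · push_cast; ring
    have e3 : (i + 1) * k = i * k + k := by ring
    have hM : qff q ((k : ℝ) + s + 1) (i + 1) ≠ 0 := by
      rw [show (k : ℝ) + s + 1 = ((k + s + 1 : ℕ) : ℝ) by push_cast; ring]
      exact qff_nat_ne_zero hq hq1 _ _ (by omega)
    rw [e1, e2, e3, pow_add]
    field_simp
  rw [Finset.sum_congr rfl hterm, ← Finset.mul_sum, h0, add_comm]

lemma FG_main {q : ℝ} (hq : 0 < q) (hq1 : q ≠ 1) : ∀ s k : ℕ, Fp q s k = Gp q s k := by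
  intro s
  induction s with
  | zero =>
    intro k
    simp only [Fp, Gp, cc, qfact_zero]
    rw [Finset.sum_range_one, Finset.sum_range_one]
    have e2 : qff q ((k : ℝ) + (0 : ℕ) + 1) (0 + 1) = qb q ((k : ℝ) + (0 : ℕ) + 1) := by
      simp only [qff, zero_add, Finset.prod_range_one, Nat.cast_zero, sub_zero]
    rw [e2]
    simp [qff, qfact_zero]
  | succ s ih =>
    intro k
    rw [F_rec hq hq1 k s, G_rec hq hq1 k s, ih k]

theorem g_r_second_expression (q : ℝ) (hq : 0 < q) (hq1 : q ≠ 1) :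
    ∀ r k : ℕ, 1 ≤ r →
      (-1 : ℝ) ^ k * qfact q k *
          ∑ i ∈ range r, q ^ (i * k) * qff q ((r : ℝ) - 1) i / qff q ((k : ℝ) + r) (i + 1)
        = (-1 : ℝ) ^ k * qfact q k * qfact q (r - 1) * q ^ (-(r : ℤ) + 1) *
            ∑ i ∈ range r,
              (q - 1) ^ i * q ^ (((i * (i + 1) / 2 : ℕ) : ℤ) - (i : ℤ) * ((r : ℤ) - 1)) /
                qfact q (r - 1 - i) * (1 / qb q ((k : ℝ) + i + 1)) := by
  intro r k hr
  obtain ⟨s, rfl⟩ : ∃ s, r = s + 1 := ⟨r - 1, by omega⟩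
  have hq0 : q ≠ 0 := hq.ne'
  have hF : (∑ i ∈ range (s + 1),
      q ^ (i * k) * qff q (((s + 1 : ℕ) : ℝ) - 1) i / qff q ((k : ℝ) + ((s + 1 : ℕ) : ℝ)) (i + 1))
      = Fp q s k := by
    unfold Fp
    apply Finset.sum_congr rfl
    intro i _
    rw [show ((s + 1 : ℕ) : ℝ) - 1 = (s : ℝ) by push_cast; ring,
      show (k : ℝ) + ((s + 1 : ℕ) : ℝ) = (k : ℝ) + s + 1 by push_cast; ring]
  have hz : q ^ (-((s + 1 : ℕ) : ℤ) + 1) = 1 / q ^ s := by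
    rw [show -((s + 1 : ℕ) : ℤ) + 1 = -(s : ℤ) by push_cast; ring, zpow_neg, zpow_natCast,
      one_div]
  have hsum : (∑ i ∈ range (s + 1),
      (q - 1) ^ i * q ^ (((i * (i + 1) / 2 : ℕ) : ℤ) - (i : ℤ) * (((s + 1 : ℕ) : ℤ) - 1)) /
        qfact q ((s + 1) - 1 - i) * (1 / qb q ((k : ℝ) + i + 1)))
      = ∑ i ∈ range (s + 1), cc q i s * (1 / qb q ((k : ℝ) + i + 1)) := by
    apply Finset.sum_congr rfl
    intro i _
    have he : (((i * (i + 1) / 2 : ℕ) : ℤ) - (i : ℤ) * (((s + 1 : ℕ) : ℤ) - 1))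
        = ((i * (i + 1) / 2 : ℕ) : ℤ) - ((i * s : ℕ) : ℤ) := by push_cast; ring
    rw [he, zpow_sub₀ hq0, zpow_natCast, zpow_natCast]
    unfold cc
    rw [show (s + 1) - 1 - i = s - i from by omega]
    ring
  rw [hF, FG_main hq hq1 s k, Gp, hsum, hz, Nat.add_sub_cancel]
  ring
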